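/- arXiv:1703.07728 — 2 statements merged into one kernel-verified Lean document; each statement's English description precedes it below -/
import Mathlib

section
/- Let m̃ be the Fourier transform of the unit-mass surface measure of the sphere of radius R in ℝ^N, N ≥ 3. For each integer α ≥ 1 and each constant C > 1, there is a constant C' < 1 depending only on C (and N) such that whenever 1 ≤ 2πR|ζ| ≤ C and 0 < r ≤ 2, |(d/dr)^α m̃(rζ)| ≤ C' (2πR|ζ|)^{2α}. -/
set_option maxHeartbeats 1000000


open MeasureTheory Real intervalIntegral

/-- The Fourier transform of the unit-mass surface measure of the sphere of radius `R`
in `ℝ^N`, given by `m̃(ζ) = (Γ(N/2)/(Γ((N-1)/2)√π)) ∫_{-1}^1 e^{2πiR|ζ|t}(1-t²)^{(N-3)/2} dt`. -/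
noncomputable def sphereFT (N : ℕ) (R : ℝ) (ζ : EuclideanSpace ℝ (Fin N)) : ℂ :=
  ((Real.Gamma ((N:ℝ)/2) / (Real.Gamma (((N:ℝ) - 1)/2) * Real.sqrt π)) : ℝ) *
    ∫ t in (-1:ℝ)..1,
      Complex.exp (2 * (π:ℂ) * Complex.I * (R * ‖ζ‖ * t : ℝ)) *
        ((1 - t^2 : ℝ) ^ (((N:ℝ) - 3)/2) : ℝ)

private lemma contW {p : ℝ} (hp : 0 ≤ p) : Continuous fun x : ℝ => (1 - x^2) ^ p :=
  (Real.continuous_rpow_const hp).comp (by continuity)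

private lemma Gamma_half_step {x : ℝ} (hx : 0 < x) :
    Real.Gamma (x + 1/2) ≤ Real.Gamma x * Real.sqrt x := by
  have h1 : (0:ℝ) < x + 1 := by linarith
  have hkey := Real.convexOn_log_Gamma.2 (Set.mem_Ioi.2 hx) (Set.mem_Ioi.2 h1)
    (by norm_num : (0:ℝ) ≤ 1/2) (by norm_num : (0:ℝ) ≤ 1/2) (by norm_num)
  have hmid : (1/2 : ℝ) • x + (1/2 : ℝ) • (x+1) = x + 1/2 := by
    simp [smul_eq_mul]; ring
  rw [hmid] at hkey
  have hΓx : 0 < Real.Gamma x := Real.Gamma_pos_of_pos hx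
  have hΓm : 0 < Real.Gamma (x + 1/2) := Real.Gamma_pos_of_pos (by linarith)
  have hG1 : Real.Gamma (x+1) = x * Real.Gamma x := Real.Gamma_add_one hx.ne'
  simp only [Function.comp_apply, smul_eq_mul, hG1] at hkey
  rw [Real.log_mul hx.ne' hΓx.ne'] at hkey
  have hrw : Real.Gamma (x + 1/2) = Real.exp (Real.log (Real.Gamma (x + 1/2))) :=
    (Real.exp_log hΓm).symm
  rw [hrw]
  have hrhs : Real.Gamma x * Real.sqrt x
      = Real.exp (Real.log (Real.Gamma x) + (1/2) * Real.log x) := by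
    rw [Real.exp_add, Real.exp_log hΓx]
    congr 1
    rw [Real.sqrt_eq_rpow, Real.rpow_def_of_pos hx]
    ring_nf
  rw [hrhs]
  exact Real.exp_le_exp.2 (by linarith)

private lemma integral_x_mul {p : ℝ} (hp : 0 ≤ p) :
    ∫ x in (0:ℝ)..1, x * (1 - x^2) ^ p = 1 / (2*(p+1)) := by
  have hq : (1:ℝ) ≤ p + 1 := by linarith
  have hp1 : (0:ℝ) < p + 1 := by linarith
  have hd : ∀ x ∈ Set.uIcc (0:ℝ) 1,
      HasDerivAt (fun x : ℝ => -((1-x^2)^(p+1) / (2*(p+1)))) (x * (1-x^2)^p) x := by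
    intro x _
    have h1 : HasDerivAt (fun x : ℝ => 1 - x^2) (-(2*x)) x := by
      simpa using ((hasDerivAt_pow 2 x).const_sub 1)
    have h2 : HasDerivAt (fun u : ℝ => u ^ (p+1)) ((p+1) * (1-x^2) ^ (p+1-1)) (1-x^2) :=
      Real.hasDerivAt_rpow_const (Or.inr hq)
    have h3 := h2.comp x h1
    have h4 := (h3.div_const (2*(p+1))).neg
    convert h4 using 1
    · rfl
    · rfl
    · rfl
    rw [add_sub_cancel_right]
    field_simp
  have hint : IntervalIntegrable (fun x : ℝ => x * (1-x^2)^p) volume 0 1 :=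
    (continuous_id.mul (contW hp)).intervalIntegrable _ _
  rw [intervalIntegral.integral_eq_sub_of_hasDerivAt hd hint]
  have e1 : ((1:ℝ) - 1^2) = 0 := by norm_num
  have e0 : ((1:ℝ) - 0^2) = 1 := by norm_num
  rw [e1, e0, Real.zero_rpow (by linarith : p + 1 ≠ 0), Real.one_rpow]
  ring

private lemma integral_abs_mul {p : ℝ} (hp : 0 ≤ p) :
    ∫ x in (-1:ℝ)..1, |x| * (1 - x^2) ^ p = 1/(p+1) := by
  have hcont : Continuous fun x:ℝ => |x| * (1-x^2)^p := continuous_abs.mul (contW hp)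
  have hsplit : (∫ x in (-1:ℝ)..0, |x| * (1-x^2)^p) + (∫ x in (0:ℝ)..1, |x| * (1-x^2)^p)
      = ∫ x in (-1:ℝ)..1, |x| * (1-x^2)^p :=
    intervalIntegral.integral_add_adjacent_intervals (hcont.intervalIntegrable _ _)
      (hcont.intervalIntegrable _ _)
  have hneg : (∫ x in (-1:ℝ)..0, |x| * (1-x^2)^p) = ∫ x in (0:ℝ)..1, |x| * (1-x^2)^p := by
    have h0 : (∫ x in (0:ℝ)..1, |(-x)| * (1-(-x)^2)^p) = ∫ x in (-1:ℝ)..(-0:ℝ), |x| * (1-x^2)^p :=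
      intervalIntegral.integral_comp_neg (fun x : ℝ => |x| * (1-x^2)^p)
    simp only [abs_neg, neg_sq, neg_zero] at h0
    rw [h0]
  have hpos : (∫ x in (0:ℝ)..1, |x| * (1-x^2)^p) = ∫ x in (0:ℝ)..1, x * (1-x^2)^p := by
    apply intervalIntegral.integral_congr
    intro x hx
    rw [Set.uIcc_of_le (by norm_num : (0:ℝ) ≤ 1)] at hx
    show |x| * (1-x^2)^p = x * (1-x^2)^p
    rw [abs_of_nonneg hx.1]
  rw [← hsplit, hneg, hpos, integral_x_mul hp, ← add_div,
    show (2:ℝ)*(p+1) = (p+1)*2 from by ring, ← div_div, div_right_comm]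
  norm_num

open FourierTransform in
private noncomputable def wFn (p : ℝ) : ℝ → ℂ :=
  fun t => Set.indicator (Set.Icc (-1:ℝ) 1) (fun t => (((1 - t^2 : ℝ) ^ p : ℝ) : ℂ)) t

private lemma wFn_pow_integrable {p : ℝ} (hp : 0 ≤ p) (n : ℕ) :
    Integrable (fun x : ℝ => x^n • wFn p x) := by
  have heq : (fun x : ℝ => x^n • wFn p x)
      = Set.indicator (Set.Icc (-1:ℝ) 1) (fun x => x^n • (((1 - x^2 : ℝ) ^ p : ℝ) : ℂ)) := by
    funext x
    by_cases h : x ∈ Set.Icc (-1:ℝ) 1 <;>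
      simp [wFn, Set.indicator_of_mem, Set.indicator_of_notMem, h]
  rw [heq]
  apply MeasureTheory.IntegrableOn.integrable_indicator _ measurableSet_Icc
  apply Continuous.integrableOn_Icc
  exact (continuous_pow n).smul (Complex.continuous_ofReal.comp (contW hp))

open FourierTransform in
private lemma wFn_fourier {p : ℝ} (u : ℝ) :
    𝓕 (wFn p) u = ∫ t in (-1:ℝ)..1,
      Complex.exp (2 * (π:ℂ) * Complex.I * ((-u * t : ℝ) : ℂ)) * (((1 - t^2 : ℝ) ^ p : ℝ) : ℂ) := by
  rw [Real.fourier_real_eq_integral_exp_smul]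
  simp only [show ∀ v : ℝ, -2 * π * v * u = -2 * π * (v * u) from fun v => by ring]
  have heq : ∀ v : ℝ, Complex.exp (↑(-2 * π * (v * u)) * Complex.I) • wFn p v
      = Set.indicator (Set.Icc (-1:ℝ) 1)
          (fun t => Complex.exp (2 * (π:ℂ) * Complex.I * ((-u * t : ℝ) : ℂ))
            * (((1 - t^2 : ℝ) ^ p : ℝ) : ℂ)) v := by
    intro v
    by_cases h : v ∈ Set.Icc (-1:ℝ) 1
    · simp only [wFn, Set.indicator_of_mem h, smul_eq_mul]
      congr 1
      push_cast
      ring_nf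
    · simp [wFn, Set.indicator_of_notMem, h]
  have h1 : ∀ v : ℝ, (inner ℝ v u : ℝ) = v * u := fun v => by simp [mul_comm]
  simp_rw [heq]
  rw [MeasureTheory.integral_indicator measurableSet_Icc,
    MeasureTheory.integral_Icc_eq_integral_Ioc,
    ← intervalIntegral.integral_of_le (by norm_num : (-1:ℝ) ≤ 1)]

open FourierTransform Filter Topology in
/-- Intermediate-range derivative bound: for each `α ≥ 1` and `C > 1` there is `C' < 1`
(depending only on `C` and `N`) such that for `1 ≤ 2πR|ζ| ≤ C` and `0 < r ≤ 2`,
`|(d/dr)^α m̃(rζ)| ≤ C' (2πR|ζ|)^{2α}`. -/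
theorem sphereFT_deriv_intermediate_bound (N : ℕ) (hN : 3 ≤ N) (R : ℝ) (hR : 0 < R)
    (hRsurf : R ^ (N - 1) = Real.Gamma ((N:ℝ)/2) / (2 * (π : ℝ) ^ ((N:ℝ)/2)))
    (α : ℕ) (hα : 1 ≤ α) (C : ℝ) (hC : 1 < C) :
    ∃ C' : ℝ, C' < 1 ∧
      ∀ ζ : EuclideanSpace ℝ (Fin N), ∀ r : ℝ,
        1 ≤ 2 * π * R * ‖ζ‖ → 2 * π * R * ‖ζ‖ ≤ C → 0 < r → r ≤ 2 →
          ‖iteratedDeriv α (fun s : ℝ => sphereFT N R (s • ζ)) r‖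
            ≤ C' * (2 * π * R * ‖ζ‖) ^ (2 * α) := by
  have h3N : (3:ℝ) ≤ (N:ℝ) := by exact_mod_cast hN
  set p : ℝ := ((N:ℝ) - 3)/2 with hpdef
  have hp : 0 ≤ p := by rw [hpdef]; linarith
  have hπ := Real.pi_pos
  have hΓ1 : 0 < Real.Gamma ((N:ℝ)/2) := Real.Gamma_pos_of_pos (by linarith)
  have hΓ2 : 0 < Real.Gamma (((N:ℝ)-1)/2) := Real.Gamma_pos_of_pos (by linarith)
  have hsπ : 0 < Real.sqrt π := Real.sqrt_pos.2 hπ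
  have hsπ1 : 1 < Real.sqrt π := by
    rw [show (1:ℝ) = Real.sqrt 1 by simp]
    exact Real.sqrt_lt_sqrt zero_le_one (by linarith [Real.pi_gt_three])
  set c : ℝ := Real.Gamma ((N:ℝ)/2) / (Real.Gamma (((N:ℝ)-1)/2) * Real.sqrt π) with hcdef
  have hc : 0 < c := by
    rw [hcdef]; positivity
  refine ⟨2/((N:ℝ)-1) * c, ?_, ?_⟩
  · -- C' < 1
    have hx : 0 < ((N:ℝ)-1)/2 := by linarith
    have hst := Gamma_half_step hx
    rw [show ((N:ℝ)-1)/2 + 1/2 = (N:ℝ)/2 from by ring] at hst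
    have hsq : Real.sqrt (((N:ℝ)-1)/2) ≤ ((N:ℝ)-1)/2 := by
      have h1le : 1 ≤ ((N:ℝ)-1)/2 := by linarith
      calc Real.sqrt (((N:ℝ)-1)/2) ≤ Real.sqrt ((((N:ℝ)-1)/2)^2) :=
            Real.sqrt_le_sqrt (by nlinarith)
        _ = ((N:ℝ)-1)/2 := Real.sqrt_sq (by linarith)
    have hkey : 2 * Real.Gamma ((N:ℝ)/2)
        < ((N:ℝ)-1) * (Real.Gamma (((N:ℝ)-1)/2) * Real.sqrt π) := by
      have h1 : Real.Gamma ((N:ℝ)/2) ≤ Real.Gamma (((N:ℝ)-1)/2) * (((N:ℝ)-1)/2) := by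
        calc Real.Gamma ((N:ℝ)/2) ≤ Real.Gamma (((N:ℝ)-1)/2) * Real.sqrt (((N:ℝ)-1)/2) := hst
          _ ≤ Real.Gamma (((N:ℝ)-1)/2) * (((N:ℝ)-1)/2) :=
            mul_le_mul_of_nonneg_left hsq hΓ2.le
      nlinarith
    have hN1 : (0:ℝ) < (N:ℝ) - 1 := by linarith
    rw [hcdef, div_mul_eq_mul_div, div_lt_one hN1, ← mul_div_assoc,
      div_lt_iff₀ (by positivity)]
    linarith
  · intro ζ r h1X h2X hr0 hr2
    have hζ : 0 < ‖ζ‖ := by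
      by_contra h
      push_neg at h
      have h0 : ‖ζ‖ = 0 := le_antisymm h (norm_nonneg ζ)
      rw [h0] at h1X
      nlinarith
    set a : ℝ := R * ‖ζ‖ with hadef
    have ha : 0 < a := mul_pos hR hζ
    have hX1 : (1:ℝ) ≤ 2 * π * R * ‖ζ‖ := h1X
    have hXa : 2 * π * R * ‖ζ‖ = 2*π*a := by rw [hadef]; ring
    have hIntN : ∀ n : ℕ, (n:ℕ∞) ≤ (α:ℕ∞) →
        Integrable (fun v : ℝ => ‖v‖^n * ‖wFn p v‖) := by
      intro n _
      have h := (wFn_pow_integrable hp n).norm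
      have heq : (fun x : ℝ => ‖x^n • wFn p x‖) = fun v : ℝ => ‖v‖^n * ‖wFn p v‖ := by
        funext x
        simp [norm_smul, Real.norm_eq_abs, abs_pow]
      rwa [heq] at h
    have hCD : ContDiff ℝ (α:ℕ∞) (𝓕 (wFn p)) :=
      Real.contDiff_fourier hIntN
    have hID : iteratedDeriv α (𝓕 (wFn p))
        = 𝓕 (fun x : ℝ => (-2 * (π:ℂ) * Complex.I * (x:ℂ))^α • wFn p x) :=
      Real.iteratedDeriv_fourier (N := (α:ℕ∞))
        (fun n _ => wFn_pow_integrable hp n) le_rfl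
    have hEq : (fun s : ℝ => sphereFT N R (s • ζ)) =ᶠ[𝓝 r]
        fun s : ℝ => (c:ℂ) • (𝓕 (wFn p)) ((-a) * s) := by
      filter_upwards [Ioi_mem_nhds hr0] with s hs
      have hs0 : (0:ℝ) < s := hs
      show sphereFT N R (s • ζ) = (c:ℂ) • (𝓕 (wFn p)) ((-a) * s)
      rw [sphereFT, wFn_fourier, smul_eq_mul]
      congr 1
      apply intervalIntegral.integral_congr
      intro t ht
      show Complex.exp (2 * (π:ℂ) * Complex.I * ((R * ‖s • ζ‖ * t : ℝ) : ℂ))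
            * (((1 - t^2 : ℝ) ^ p : ℝ) : ℂ)
          = Complex.exp (2 * (π:ℂ) * Complex.I * ((-((-a) * s) * t : ℝ) : ℂ))
            * (((1 - t^2 : ℝ) ^ p : ℝ) : ℂ)
      congr 3
      rw [norm_smul, Real.norm_eq_abs, abs_of_pos hs0, hadef]
      ring
    rw [Filter.EventuallyEq.iteratedDeriv_eq α hEq]
    have hG : ContDiff ℝ (α:ℕ∞) fun s : ℝ => (𝓕 (wFn p)) ((-a) * s) :=
      hCD.comp (contDiff_const.mul contDiff_id)
    have hsm : iteratedDeriv α (fun s : ℝ => (c:ℂ) • (𝓕 (wFn p)) ((-a) * s)) r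
        = (c:ℂ) • iteratedDeriv α (fun s : ℝ => (𝓕 (wFn p)) ((-a) * s)) r := by
      rw [← iteratedDerivWithin_univ, ← iteratedDerivWithin_univ]
      exact iteratedDerivWithin_const_smul (Set.mem_univ r) uniqueDiffOn_univ (c:ℂ)
        (hG.of_le (by simp)).contDiffWithinAt
    have hcomp : iteratedDeriv α (fun s : ℝ => (𝓕 (wFn p)) ((-a) * s)) r
        = (-a)^α • iteratedDeriv α (𝓕 (wFn p)) ((-a) * r) := by
      have h := iteratedDeriv_comp_const_smul (n := α) (hCD.of_le (by simp)) (-a)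
      exact congrFun h r
    rw [hsm, hcomp, hID, norm_smul, norm_smul]
    have hnc : ‖((c:ℝ):ℂ)‖ = c := by
      rw [Complex.norm_real, Real.norm_eq_abs, abs_of_pos hc]
    have hna : ‖(-a)^α‖ = a^α := by
      rw [Real.norm_eq_abs, abs_pow, abs_neg, abs_of_pos ha]
    rw [hnc, hna]
    have hbound : ‖𝓕 (fun x : ℝ => (-2 * (π:ℂ) * Complex.I * (x:ℂ))^α • wFn p x) ((-a)*r)‖
        ≤ (2*π)^α * (2/((N:ℝ)-1)) := by
      refine le_trans (VectorFourier.norm_fourierIntegral_le_integral_norm _ _ _ _ _) ?_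
      have hptw : (fun x : ℝ => ‖(-2 * (π:ℂ) * Complex.I * (x:ℂ))^α • wFn p x‖)
          = Set.indicator (Set.Icc (-1:ℝ) 1)
              (fun x => (2*π)^α * (|x|^α * (1-x^2)^p)) := by
        funext x
        by_cases h : x ∈ Set.Icc (-1:ℝ) 1
        · have hmem := Set.mem_Icc.1 h
          have hx2 : (0:ℝ) ≤ 1 - x^2 := by nlinarith [hmem.1, hmem.2]
          simp only [wFn, Set.indicator_of_mem h, norm_smul, norm_pow]
          rw [show ‖-2 * (π:ℂ) * Complex.I * (x:ℂ)‖ = 2*π*|x| by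
            simp [norm_mul, Complex.norm_real, Real.norm_eq_abs, abs_of_pos hπ]]
          rw [Complex.norm_real, Real.norm_eq_abs,
            abs_of_nonneg (Real.rpow_nonneg hx2 p)]
          rw [mul_pow, mul_pow]
          ring
        · simp [wFn, Set.indicator_of_notMem h]
      rw [hptw, MeasureTheory.integral_indicator measurableSet_Icc,
        MeasureTheory.integral_const_mul]
      have hmono : (∫ x in Set.Icc (-1:ℝ) 1, |x|^α * (1-x^2)^p)
          ≤ ∫ x in Set.Icc (-1:ℝ) 1, |x| * (1-x^2)^p := by
        apply MeasureTheory.setIntegral_mono_on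
        · exact ((continuous_abs.pow α).mul (contW hp)).integrableOn_Icc
        · exact (continuous_abs.mul (contW hp)).integrableOn_Icc
        · exact measurableSet_Icc
        · intro x hx
          have hmem := Set.mem_Icc.1 hx
          have hx1 : |x| ≤ 1 := abs_le.2 ⟨hmem.1, hmem.2⟩
          have hx2 : (0:ℝ) ≤ 1 - x^2 := by nlinarith [hmem.1, hmem.2]
          have hpow : |x|^α ≤ |x| := by
            have := pow_le_pow_of_le_one (abs_nonneg x) hx1 hα
            rwa [pow_one] at this
          exact mul_le_mul_of_nonneg_right hpow (Real.rpow_nonneg hx2 p)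
      have hval : (∫ x in Set.Icc (-1:ℝ) 1, |x| * (1-x^2)^p) = 2/((N:ℝ)-1) := by
        rw [MeasureTheory.integral_Icc_eq_integral_Ioc,
          ← intervalIntegral.integral_of_le (by norm_num : (-1:ℝ) ≤ 1),
          integral_abs_mul hp, show p + 1 = ((N:ℝ)-1)/2 from by rw [hpdef]; ring,
          one_div_div]
      calc (2*π)^α * ∫ x in Set.Icc (-1:ℝ) 1, |x|^α * (1-x^2)^p
          ≤ (2*π)^α * ∫ x in Set.Icc (-1:ℝ) 1, |x| * (1-x^2)^p := by
            apply mul_le_mul_of_nonneg_left hmono (by positivity)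
        _ = (2*π)^α * (2/((N:ℝ)-1)) := by rw [hval]
    have hN1 : (0:ℝ) < (N:ℝ) - 1 := by linarith
    calc c * (a^α * ‖𝓕 (fun x : ℝ => (-2 * (π:ℂ) * Complex.I * (x:ℂ))^α • wFn p x) ((-a)*r)‖)
        ≤ c * (a^α * ((2*π)^α * (2/((N:ℝ)-1)))) := by
          apply mul_le_mul_of_nonneg_left _ hc.le
          exact mul_le_mul_of_nonneg_left hbound (by positivity)
      _ = (2/((N:ℝ)-1) * c) * (2*π*a)^α := by rw [mul_pow]; ring
      _ = (2/((N:ℝ)-1) * c) * (2 * π * R * ‖ζ‖)^α := by rw [hXa]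
      _ ≤ (2/((N:ℝ)-1) * c) * (2 * π * R * ‖ζ‖)^(2*α) := by
          apply mul_le_mul_of_nonneg_left _ (by positivity)
          exact pow_le_pow_right₀ hX1 (by omega)
end

section
/- Let m̃ be the Fourier transform of the unit-mass surface measure of the sphere of radius R in ℝ^N, N ≥ 3. For every C > 1 there exists c > 0 such that for all ζ with 2πR|ζ| ≤ C and all r ∈ [1,2], |m̃(rζ)| ≤ e^{-c(2πR|ζ|)²}. -/
open MeasureTheory Real intervalIntegral

lemma integral_cos_pow_gamma (n : ℕ) :
    ∫ x in (-(π/2))..(π/2), Real.cos x ^ n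
      = Real.sqrt π * Real.Gamma (((n:ℝ)+1)/2) / Real.Gamma (((n:ℝ)+2)/2) := by
  have hπ : (0:ℝ) < Real.sqrt π := Real.sqrt_pos.mpr Real.pi_pos
  induction n using Nat.twoStepInduction with
  | zero =>
    norm_num
    rw [Real.Gamma_one_half_eq]
    exact (Real.mul_self_sqrt Real.pi_pos.le).symm
  | one =>
    simp only [pow_one, integral_cos, Real.sin_pi_div_two, Nat.cast_one]
    rw [Real.sin_neg, Real.sin_pi_div_two]
    have h32 : ((1:ℝ)+2)/2 = 1/2 + 1 := by norm_num
    rw [h32, Real.Gamma_add_one (by norm_num), Real.Gamma_one_half_eq]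
    have h1 : ((1:ℝ)+1)/2 = 1 := by norm_num
    rw [h1, Real.Gamma_one]
    field_simp
    ring
  | more n ih1 ih2 =>
    have h := integral_cos_pow (a := -(π/2)) (b := π/2) n
    rw [Real.cos_pi_div_two] at h
    have hneg : Real.cos (-(π/2)) = 0 := by rw [Real.cos_neg, Real.cos_pi_div_two]
    rw [hneg] at h
    simp only [zero_pow (Nat.succ_ne_zero n), zero_mul, mul_zero, sub_zero, zero_sub, neg_zero,
      zero_div, zero_add] at h
    rw [h, ih1]
    have hΓ : 0 < Real.Gamma (((n:ℝ)+2)/2) := Real.Gamma_pos_of_pos (by positivity)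
    have e1 : (((n:ℕ)+2:ℕ):ℝ) = (n:ℝ)+2 := by push_cast; ring
    rw [e1]
    have e2 : ((n:ℝ)+2+1)/2 = ((n:ℝ)+1)/2 + 1 := by ring
    have e3 : ((n:ℝ)+2+2)/2 = ((n:ℝ)+2)/2 + 1 := by ring
    rw [e2, e3, Real.Gamma_add_one (by positivity), Real.Gamma_add_one (by positivity)]
    have h2 : ((n:ℝ)+2) ≠ 0 := by positivity
    field_simp

lemma integral_one_sub_sq_rpow (n : ℕ) (hn : 1 ≤ n) :
    ∫ x in (-1:ℝ)..1, (1 - x^2) ^ (((n:ℝ)-1)/2)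
      = ∫ x in (-(π/2))..(π/2), Real.cos x ^ n := by
  have hq : (0:ℝ) ≤ ((n:ℝ)-1)/2 := by
    have : (1:ℝ) ≤ (n:ℝ) := by exact_mod_cast hn
    linarith
  have hg : Continuous (fun u : ℝ => (1 - u^2) ^ (((n:ℝ)-1)/2)) :=
    (Real.continuous_rpow_const hq).comp (by continuity)
  calc
    ∫ x in (-1:ℝ)..1, (1 - x^2) ^ (((n:ℝ)-1)/2)
        = ∫ x in Real.sin (-(π/2))..Real.sin (π/2), (1 - x^2) ^ (((n:ℝ)-1)/2) := by
          rw [Real.sin_neg, Real.sin_pi_div_two]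
    _ = ∫ x in (-(π/2))..(π/2), (1 - Real.sin x^2) ^ (((n:ℝ)-1)/2) * Real.cos x :=
          (integral_comp_mul_deriv (fun x _ => Real.hasDerivAt_sin x)
            Real.continuousOn_cos hg).symm
    _ = ∫ x in (-(π/2))..(π/2), Real.cos x ^ n := by
          refine integral_congr_ae (MeasureTheory.ae_of_all _ fun x h => ?_)
          rw [Set.uIoc_of_le (neg_le_self (le_of_lt (half_pos Real.pi_pos))), Set.mem_Ioc] at h
          have hc : 0 ≤ Real.cos x :=
            Real.cos_nonneg_of_mem_Icc ⟨le_of_lt h.1, h.2⟩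
          rw [← Real.cos_sq']
          have h2q : ((Real.cos x)^2) ^ (((n:ℝ)-1)/2) = Real.cos x ^ (n-1 : ℕ) := by
            rw [← Real.rpow_natCast (Real.cos x) 2, ← Real.rpow_mul hc]
            rw [show ((2:ℕ):ℝ) * (((n:ℝ)-1)/2) = ((n - 1 : ℕ) : ℝ) by
              rw [Nat.cast_sub hn]; push_cast; ring]
            exact Real.rpow_natCast _ _
          rw [h2q, ← pow_succ, Nat.sub_add_cancel hn]

lemma weight_integral (N : ℕ) (hN : 3 ≤ N) :
    ∫ x in (-1:ℝ)..1, (1 - x^2) ^ (((N:ℝ)-3)/2)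
      = Real.sqrt π * Real.Gamma (((N:ℝ)-1)/2) / Real.Gamma ((N:ℝ)/2) := by
  have h2N : 2 ≤ N := by omega
  have hc2 : ((N - 2 : ℕ) : ℝ) = (N:ℝ) - 2 := by
    rw [Nat.cast_sub h2N]; norm_num
  have h1 : ((N:ℝ)-3)/2 = (((N-2:ℕ):ℝ)-1)/2 := by rw [hc2]; ring
  rw [h1, integral_one_sub_sq_rpow (N-2) (by omega), integral_cos_pow_gamma, hc2]
  norm_num
  ring_nf

set_option maxHeartbeats 1000000 in
/-- Gaussian bound in bounded frequency ranges: for every `C > 1` there is `c > 0` with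
`|m̃(rζ)| ≤ e^{-c(2πR|ζ|)²}` whenever `2πR|ζ| ≤ C` and `1 ≤ r ≤ 2`. -/
theorem sphereFT_gaussian_bound (N : ℕ) (hN : 3 ≤ N) (R : ℝ) (hR : 0 < R)
    (hRsurf : R ^ (N - 1) = Real.Gamma ((N:ℝ)/2) / (2 * (π : ℝ) ^ ((N:ℝ)/2)))
    (C : ℝ) (hC : 1 < C) :
    ∃ c : ℝ, 0 < c ∧
      ∀ ζ : EuclideanSpace ℝ (Fin N), 2 * π * R * ‖ζ‖ ≤ C →
        ∀ r : ℝ, 1 ≤ r → r ≤ 2 →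
          ‖sphereFT N R (r • ζ)‖ ≤ Real.exp (-c * (2 * π * R * ‖ζ‖) ^ 2) := by
  have hN3 : (3:ℝ) ≤ (N:ℝ) := by exact_mod_cast hN
  set q : ℝ := ((N:ℝ)-3)/2 with hq_def
  have hq : 0 ≤ q := by rw [hq_def]; linarith
  set w : ℝ → ℝ := fun t => (1 - t^2) ^ q with hw_def
  have hw_cont : Continuous w := (Real.continuous_rpow_const hq).comp (by continuity)
  have hw_nonneg : ∀ t : ℝ, -1 ≤ t → t ≤ 1 → 0 ≤ w t := fun t h1 h2 =>
    Real.rpow_nonneg (by nlinarith) q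
  have hΓ1 : 0 < Real.Gamma ((N:ℝ)/2) := Real.Gamma_pos_of_pos (by linarith)
  have hΓ2 : 0 < Real.Gamma (((N:ℝ)-1)/2) := Real.Gamma_pos_of_pos (by linarith)
  have hπ : (0:ℝ) < Real.sqrt π := Real.sqrt_pos.mpr Real.pi_pos
  set K : ℝ := Real.Gamma ((N:ℝ)/2) / (Real.Gamma (((N:ℝ)-1)/2) * Real.sqrt π) with hK_def
  have hK : 0 < K := by rw [hK_def]; positivity
  have hnorm : K * ∫ x in (-1:ℝ)..1, w x = 1 := by
    have h : (∫ x in (-1:ℝ)..1, w x)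
        = Real.sqrt π * Real.Gamma (((N:ℝ)-1)/2) / Real.Gamma ((N:ℝ)/2) := by
      simp only [hw_def, hq_def]
      exact weight_integral N hN
    rw [h, hK_def]
    field_simp
  -- the small interval
  have hC0 : (0:ℝ) < C := by linarith
  set δ : ℝ := 1/(2*C) with hδ_def
  have hδ0 : 0 < δ := by rw [hδ_def]; positivity
  have hδ1 : δ < 1 := by
    rw [hδ_def, div_lt_one (by linarith)]; linarith
  set J : ℝ := ∫ t in (δ/2)..δ, t^2 * w t with hJ_def
  have hJcont : Continuous fun t : ℝ => t^2 * w t := (continuous_pow 2).mul hw_cont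
  have hJpos : 0 < J := by
    rw [hJ_def]
    apply intervalIntegral_pos_of_pos_on (hJcont.intervalIntegrable _ _)
    · intro t ht
      have h1 : 0 < t := lt_trans (by positivity) ht.1
      have h2 : t < 1 := lt_trans ht.2 hδ1
      have : 0 < w t := Real.rpow_pos_of_pos (by nlinarith) q
      positivity
    · linarith
  refine ⟨2/π^2 * K * J, by positivity, ?_⟩
  intro ζ hζ r hr1 hr2
  set s : ℝ := 2 * π * R * ‖ζ‖ with hs_def
  have hs0 : 0 ≤ s := by rw [hs_def]; positivity
  set c : ℝ := 2/π^2 * K * J with hc_def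
  have hr0 : (0:ℝ) ≤ r := by linarith
  have hnormr : ‖r • ζ‖ = r * ‖ζ‖ := by
    rw [norm_smul, Real.norm_eq_abs, abs_of_nonneg hr0]
  set A : ℝ := 2 * π * R * ‖r • ζ‖ with hA_def
  have hAs : A = r * s := by rw [hA_def, hs_def, hnormr]; ring
  have hsA : s ≤ A := by
    rw [hAs]
    calc s = 1 * s := (one_mul s).symm
    _ ≤ r * s := mul_le_mul_of_nonneg_right hr1 hs0
  have hA2C : A ≤ 2*C := by
    rw [hAs]
    calc r * s ≤ 2 * s := mul_le_mul_of_nonneg_right hr2 hs0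
    _ ≤ 2 * C := by linarith
  have hA0 : 0 ≤ A := by rw [hA_def]; positivity
  -- step 1 : the integral is real
  have hwc : ∀ t : ℝ, Complex.exp (2 * (π:ℂ) * Complex.I * ((R * ‖r • ζ‖ * t : ℝ) : ℂ))
        * ((w t : ℝ) : ℂ)
      = ((Real.cos (A*t) * w t : ℝ) : ℂ) + ((Real.sin (A*t) * w t : ℝ) : ℂ) * Complex.I := by
    intro t
    have h1 : 2 * (π:ℂ) * Complex.I * ((R * ‖r • ζ‖ * t : ℝ) : ℂ)
        = ((A*t : ℝ) : ℂ) * Complex.I := by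
      rw [hA_def]; push_cast; ring
    rw [h1, Complex.exp_mul_I]
    push_cast
    ring
  have hcos_int : IntervalIntegrable (fun t => Real.cos (A*t) * w t) volume (-1) 1 :=
    (((Real.continuous_cos.comp (continuous_const.mul continuous_id)).mul
      hw_cont)).intervalIntegrable _ _
  have hsin_int : IntervalIntegrable (fun t => Real.sin (A*t) * w t) volume (-1) 1 :=
    (((Real.continuous_sin.comp (continuous_const.mul continuous_id)).mul
      hw_cont)).intervalIntegrable _ _
  have hodd : (∫ t in (-1:ℝ)..1, Real.sin (A*t) * w t) = 0 := by
    have h := intervalIntegral.integral_comp_neg (a := (-1:ℝ)) (b := 1)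
      (fun t => Real.sin (A*t) * w t)
    simp only [neg_neg] at h
    have h2 : (∫ t in (-1:ℝ)..1, Real.sin (A*(-t)) * w (-t))
        = ∫ t in (-1:ℝ)..1, -(Real.sin (A*t) * w t) := by
      apply intervalIntegral.integral_congr
      intro t ht
      simp only [hw_def, mul_neg, Real.sin_neg, neg_sq, neg_mul]
    rw [h2, intervalIntegral.integral_neg] at h
    linarith
  have hint : (∫ t in (-1:ℝ)..1,
        Complex.exp (2 * (π:ℂ) * Complex.I * ((R * ‖r • ζ‖ * t : ℝ) : ℂ)) * ((w t : ℝ) : ℂ))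
      = ((∫ t in (-1:ℝ)..1, Real.cos (A*t) * w t : ℝ) : ℂ) := by
    rw [intervalIntegral.integral_congr (g := fun t => ((Real.cos (A*t) * w t : ℝ) : ℂ)
        + ((Real.sin (A*t) * w t : ℝ) : ℂ) * Complex.I) (fun t _ => hwc t)]
    rw [intervalIntegral.integral_add]
    · rw [intervalIntegral.integral_mul_const, intervalIntegral.integral_ofReal,
        intervalIntegral.integral_ofReal, hodd]
      simp
    · exact (Complex.continuous_ofReal.comp ((Real.continuous_cos.comp
        (continuous_const.mul continuous_id)).mul hw_cont)).intervalIntegrable _ _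
    · exact ((Complex.continuous_ofReal.comp ((Real.continuous_sin.comp
        (continuous_const.mul continuous_id)).mul hw_cont)).mul
        continuous_const).intervalIntegrable _ _
  have hval : ‖sphereFT N R (r • ζ)‖ = |K * ∫ t in (-1:ℝ)..1, Real.cos (A*t) * w t| := by
    rw [sphereFT]
    rw [show (∫ t in (-1:ℝ)..1,
        Complex.exp (2 * (π:ℂ) * Complex.I * ((R * ‖r • ζ‖ * t : ℝ) : ℂ))
          * (((1 - t^2 : ℝ) ^ (((N:ℝ) - 3)/2) : ℝ) : ℂ)) =
        ((∫ t in (-1:ℝ)..1, Real.cos (A*t) * w t : ℝ) : ℂ) from hint]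
    rw [← Complex.ofReal_mul, Complex.norm_real, Real.norm_eq_abs]
  rw [hval, abs_mul, abs_of_pos hK]
  have hπ3 : (3:ℝ) < π := Real.pi_gt_three
  set F : ℝ → ℝ := fun t => |Real.cos (A*t) * w t| with hF_def
  have hF_cont : Continuous F :=
    ((Real.continuous_cos.comp (continuous_const.mul continuous_id)).mul hw_cont).abs
  have habs : |∫ t in (-1:ℝ)..1, Real.cos (A*t) * w t| ≤ ∫ t in (-1:ℝ)..1, F t := by
    have h := intervalIntegral.norm_integral_le_integral_norm
      (f := fun t => Real.cos (A*t) * w t) (μ := volume) (by norm_num : (-1:ℝ) ≤ 1)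
    simpa [hF_def, Real.norm_eq_abs, abs_mul] using h
  have hδδ : δ/2 ≤ δ := by linarith
  have hm1 : (-1:ℝ) ≤ δ/2 := by linarith
  have hb1 : ∀ t, -1 ≤ t → t ≤ 1 → F t ≤ w t := by
    intro t h1 h2
    have hw0 := hw_nonneg t h1 h2
    calc F t = |Real.cos (A*t)| * |w t| := abs_mul _ _
    _ ≤ 1 * |w t| := by
        apply mul_le_mul_of_nonneg_right (Real.abs_cos_le_one _) (abs_nonneg _)
    _ = w t := by rw [one_mul, abs_of_nonneg hw0]
  have hb2 : ∀ t ∈ Set.Icc (δ/2) δ, F t ≤ w t - 2/π^2 * s^2 * (t^2 * w t) := by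
    intro t ht
    have ht0 : 0 ≤ t := le_trans (by linarith) ht.1
    have ht1 : t ≤ 1 := le_trans ht.2 hδ1.le
    have hw0 := hw_nonneg t (by linarith) ht1
    have hAt0 : 0 ≤ A * t := mul_nonneg hA0 ht0
    have hAt1 : A * t ≤ 1 := by
      have h2 : A * t ≤ (2*C) * δ := mul_le_mul hA2C ht.2 ht0 (by linarith)
      have h3 : (2*C) * δ = 1 := by rw [hδ_def]; field_simp
      linarith
    have hcos0 : 0 ≤ Real.cos (A*t) := Real.cos_nonneg_of_mem_Icc
      ⟨by linarith [Real.pi_pos], by linarith⟩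
    have hcosle : Real.cos (A*t) ≤ 1 - 2/π^2 * (A*t)^2 :=
      Real.cos_le_one_sub_mul_cos_sq (by rw [abs_of_nonneg hAt0]; linarith)
    have hFt : F t = Real.cos (A*t) * w t := abs_of_nonneg (mul_nonneg hcos0 hw0)
    have hst : s * t ≤ A * t := mul_le_mul_of_nonneg_right hsA ht0
    have hst0 : 0 ≤ s * t := mul_nonneg hs0 ht0
    have hsq : (s*t)^2 ≤ (A*t)^2 := pow_le_pow_left₀ hst0 hst 2
    have hπ2 : (0:ℝ) < π^2 := by positivity
    rw [hFt]
    have key : Real.cos (A*t) * w t ≤ (1 - 2/π^2 * (A*t)^2) * w t :=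
      mul_le_mul_of_nonneg_right hcosle hw0
    have key2 : (1 - 2/π^2 * (A*t)^2) * w t ≤ (1 - 2/π^2 * (s*t)^2) * w t := by
      apply mul_le_mul_of_nonneg_right _ hw0
      have : 2/π^2 * (s*t)^2 ≤ 2/π^2 * (A*t)^2 :=
        mul_le_mul_of_nonneg_left hsq (by positivity)
      linarith
    have key3 : (1 - 2/π^2 * (s*t)^2) * w t = w t - 2/π^2 * s^2 * (t^2 * w t) := by ring
    linarith
  -- integrability on pieces
  have hFi : ∀ a b : ℝ, IntervalIntegrable F volume a b := fun a b =>
    hF_cont.intervalIntegrable a b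
  have hwi : ∀ a b : ℝ, IntervalIntegrable w volume a b := fun a b =>
    hw_cont.intervalIntegrable a b
  have hi1 : ∫ t in (-1:ℝ)..(δ/2), F t ≤ ∫ t in (-1:ℝ)..(δ/2), w t :=
    intervalIntegral.integral_mono_on hm1 (hFi _ _) (hwi _ _)
      (fun t ht => hb1 t ht.1 (by linarith [ht.2]))
  have hi3 : ∫ t in δ..(1:ℝ), F t ≤ ∫ t in δ..(1:ℝ), w t :=
    intervalIntegral.integral_mono_on hδ1.le (hFi _ _) (hwi _ _)
      (fun t ht => hb1 t (by linarith [ht.1]) ht.2)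
  have hi2 : ∫ t in (δ/2)..δ, F t ≤ (∫ t in (δ/2)..δ, w t) - 2/π^2 * s^2 * J := by
    have h := intervalIntegral.integral_mono_on hδδ (hFi _ _)
      ((hw_cont.sub ((continuous_const.mul hJcont))).intervalIntegrable _ _) hb2
    simp only [Pi.sub_apply, Pi.mul_apply] at h
    rw [intervalIntegral.integral_sub (hwi _ _)
      (show IntervalIntegrable (fun t => 2/π^2 * s^2 * (t^2 * w t)) volume (δ/2) δ from
        (continuous_const.mul hJcont).intervalIntegrable _ _),
      intervalIntegral.integral_const_mul] at h
    rw [hJ_def]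
    exact h
  have hFsum : (∫ t in (-1:ℝ)..(δ/2), F t) + ((∫ t in (δ/2)..δ, F t)
      + (∫ t in δ..(1:ℝ), F t)) = ∫ t in (-1:ℝ)..1, F t := by
    rw [intervalIntegral.integral_add_adjacent_intervals (hFi _ _) (hFi _ _)]
    exact intervalIntegral.integral_add_adjacent_intervals (hFi _ _) (hFi _ _)
  have hwsum : (∫ t in (-1:ℝ)..(δ/2), w t) + ((∫ t in (δ/2)..δ, w t)
      + (∫ t in δ..(1:ℝ), w t)) = ∫ t in (-1:ℝ)..1, w t := by
    rw [intervalIntegral.integral_add_adjacent_intervals (hwi _ _) (hwi _ _)]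
    exact intervalIntegral.integral_add_adjacent_intervals (hwi _ _) (hwi _ _)
  have htot : ∫ t in (-1:ℝ)..1, F t ≤ (∫ t in (-1:ℝ)..1, w t) - 2/π^2 * s^2 * J := by
    linarith
  have hcs : K * (2/π^2 * s^2 * J) = c * s^2 := by rw [hc_def]; ring
  have hmain : K * |∫ t in (-1:ℝ)..1, Real.cos (A*t) * w t| ≤ 1 - c * s^2 := by
    have h1 : K * |∫ t in (-1:ℝ)..1, Real.cos (A*t) * w t|
        ≤ K * ((∫ t in (-1:ℝ)..1, w t) - 2/π^2 * s^2 * J) :=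
      mul_le_mul_of_nonneg_left (le_trans habs htot) hK.le
    have h2 : K * ((∫ t in (-1:ℝ)..1, w t) - 2/π^2 * s^2 * J)
        = 1 - c * s^2 := by
      rw [mul_sub, hnorm, hcs]
    linarith
  have hexp : 1 - c * s^2 ≤ Real.exp (-c * s^2) := by
    have h := Real.add_one_le_exp (-(c * s^2))
    have : -c * s^2 = -(c * s^2) := by ring
    rw [this]
    linarith
  linarith
end
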